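/- Let M, M' be elements of an associative (not necessarily commutative) ring. Define recursively D₀(M', M) = 0 and D_r(M', M) = [M', M^{r−1}] + M·D_{r−1}(M', M) + [M', D_{r−1}(M', M)] for r ≥ 1, where [A,B] = AB − BA. Then for every integer j ≥ 0: (M + M')^j = ∑_{ℓ=0}^{j} C(j, ℓ) (M^ℓ + D_ℓ(M', M)) M'^{\,j−ℓ}. -/

import Mathlib

/-- The `r`-th order essential non-commutative part `D_r(M', M)`, defined via the
recursion `D₀ = 0`, `D_r = [M', M^{r-1}] + M · D_{r-1} + [M', D_{r-1}]`. -/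
def ncPart {R : Type*} [Ring R] (M' M : R) : ℕ → R
  | 0 => 0
  | r + 1 =>
      (M' * M ^ r - M ^ r * M') + M * ncPart M' M r +
        (M' * ncPart M' M r - ncPart M' M r * M')

theorem noncommutative_binomial_identity {R : Type*} [Ring R] (M M' : R) (j : ℕ) :
    (M + M') ^ j =
      ∑ ℓ ∈ Finset.range (j + 1),
        j.choose ℓ • ((M ^ ℓ + ncPart M' M ℓ) * M' ^ (j - ℓ)) := by
  set L : AddMonoid.End R := AddMonoidHom.mulLeft (M + M') with hL
  set Rm : AddMonoid.End R := AddMonoidHom.mulRight M' with hRm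
  have hLR : Commute L Rm := by
    refine AddMonoidHom.ext fun x => ?_
    show (M + M') * (x * M') = ((M + M') * x) * M'
    rw [mul_assoc]
  have hcomm : Commute (L - Rm) Rm := hLR.sub_left (Commute.refl Rm)
  -- powers of Rm are right multiplication by powers of M'
  have hRpow : ∀ (k : ℕ) (x : R), ((Rm ^ k : AddMonoid.End R) : R → R) x = x * M' ^ k := by
    intro k
    induction k with
    | zero => intro x; simp
    | succ k ih =>
        intro x
        rw [pow_succ']
        have : ((Rm * Rm ^ k : AddMonoid.End R) : R → R) x
            = Rm ((Rm ^ k : AddMonoid.End R) x) := rfl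
        rw [this, ih]
        show (x * M' ^ k) * M' = x * M' ^ (k + 1)
        rw [pow_succ, mul_assoc]
  -- powers of L - Rm applied to 1
  have hApow : ∀ ℓ : ℕ, (((L - Rm) ^ ℓ : AddMonoid.End R) : R → R) 1
      = M ^ ℓ + ncPart M' M ℓ := by
    intro ℓ
    induction ℓ with
    | zero => simp [ncPart]
    | succ ℓ ih =>
        rw [pow_succ']
        have : (((L - Rm) * (L - Rm) ^ ℓ : AddMonoid.End R) : R → R) 1
            = (L - Rm) (((L - Rm) ^ ℓ : AddMonoid.End R) 1) := rfl
        rw [this, ih]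
        show (M + M') * (M ^ ℓ + ncPart M' M ℓ) - (M ^ ℓ + ncPart M' M ℓ) * M'
            = M ^ (ℓ + 1) + ncPart M' M (ℓ + 1)
        simp only [ncPart, pow_succ']
        noncomm_ring
  -- powers of L applied to 1
  have hLpow : ((L ^ j : AddMonoid.End R) : R → R) 1 = (M + M') ^ j := by
    induction j with
    | zero => simp
    | succ j ih =>
        rw [pow_succ']
        have : ((L * L ^ j : AddMonoid.End R) : R → R) 1
            = L ((L ^ j : AddMonoid.End R) 1) := rfl
        rw [this, ih]
        show (M + M') * (M + M') ^ j = (M + M') ^ (j + 1)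
        rw [pow_succ']
  have key : L = (L - Rm) + Rm := by abel
  have hbin := hcomm.add_pow j
  rw [← key] at hbin
  calc (M + M') ^ j = ((L ^ j : AddMonoid.End R) : R → R) 1 := hLpow.symm
    _ = ((∑ ℓ ∈ Finset.range (j + 1),
          (L - Rm) ^ ℓ * Rm ^ (j - ℓ) * (j.choose ℓ : AddMonoid.End R)) : AddMonoid.End R) 1 := by
        rw [hbin]
    _ = ∑ ℓ ∈ Finset.range (j + 1),
          j.choose ℓ • ((M ^ ℓ + ncPart M' M ℓ) * M' ^ (j - ℓ)) := by
        rw [show ∀ (s : Finset ℕ) (f : ℕ → AddMonoid.End R) (x : R), (∑ i ∈ s, f i) x = ∑ i ∈ s, f i x from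
          fun s f x => AddMonoidHom.finset_sum_apply _ _ _]
        refine Finset.sum_congr rfl fun ℓ _ => ?_
        have h1 : ((L - Rm) ^ ℓ * Rm ^ (j - ℓ) * (j.choose ℓ : AddMonoid.End R) : AddMonoid.End R) 1
            = ((L - Rm) ^ ℓ * Rm ^ (j - ℓ) : AddMonoid.End R) ((j.choose ℓ : AddMonoid.End R) 1) := rfl
        rw [h1]
        have h2 : ((j.choose ℓ : ℕ) : AddMonoid.End R) 1 = (j.choose ℓ : ℕ) • (1 : R) := by
          simp [AddMonoid.End.natCast_apply]
        rw [h2, map_nsmul]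
        congr 1
        have h3 : (((L - Rm) ^ ℓ * Rm ^ (j - ℓ) : AddMonoid.End R) : R → R) 1
            = ((Rm ^ (j - ℓ) * (L - Rm) ^ ℓ : AddMonoid.End R) : R → R) 1 := by
          rw [(hcomm.pow_pow ℓ (j - ℓ)).eq]
        rw [h3]
        have h4 : ((Rm ^ (j - ℓ) * (L - Rm) ^ ℓ : AddMonoid.End R) : R → R) 1
            = (Rm ^ (j - ℓ) : AddMonoid.End R) (((L - Rm) ^ ℓ : AddMonoid.End R) 1) := rfl
        rw [h4, hApow, hRpow]
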